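/- Let G be a finite simple graph that is 4-cycle-free. Then the number of triangles of G is at most the number of edges of G. -/

import Mathlib

/-- A 4-cycle in a simple graph: four pairwise distinct vertices `a, b, c, d` with
`a ~ b`, `b ~ c`, `c ~ d`, `d ~ a`. -/
def HasFourCycle {V : Type*} (G : SimpleGraph V) : Prop :=
  ∃ a b c d : V, a ≠ b ∧ a ≠ c ∧ a ≠ d ∧ b ≠ c ∧ b ≠ d ∧ c ≠ d ∧
    G.Adj a b ∧ G.Adj b c ∧ G.Adj c d ∧ G.Adj d a

lemma third_elem {V : Type*} [DecidableEq V] (t : Finset V) (hcard : t.card = 3)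
    {u v : V} (hu : u ∈ t) (hv : v ∈ t) (huv : u ≠ v) :
    ∃ w, w ∈ t ∧ w ≠ u ∧ w ≠ v ∧ t = {u, v, w} := by
  have h2 : ({u, v} : Finset V).card = 2 := by
    rw [Finset.card_insert_of_notMem (by simpa using huv), Finset.card_singleton]
  have hne : (t \ {u, v}).Nonempty := by
    rw [← Finset.card_pos, Finset.card_sdiff_of_subset (by
      intro x hx
      simp only [Finset.mem_insert, Finset.mem_singleton] at hx
      rcases hx with rfl | rfl <;> assumption), hcard, h2]
    norm_num
  obtain ⟨w, hw⟩ := hne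
  rw [Finset.mem_sdiff] at hw
  obtain ⟨hwt, hwn⟩ := hw
  simp only [Finset.mem_insert, Finset.mem_singleton, not_or] at hwn
  refine ⟨w, hwt, hwn.1, hwn.2, ?_⟩
  refine (Finset.eq_of_subset_of_card_le ?_ ?_).symm
  · intro x hx
    simp only [Finset.mem_insert, Finset.mem_singleton] at hx
    rcases hx with rfl | rfl | rfl <;> assumption
  · rw [hcard]
    rw [Finset.card_insert_of_notMem (by simp [huv, Ne.symm hwn.1]),
      Finset.card_insert_of_notMem (by simp [Ne.symm hwn.2]), Finset.card_singleton]

/-- A finite 4-cycle-free simple graph has at most as many triangles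
as edges. -/
theorem triangle_count_le_edge_count_of_fourCycleFree {V : Type*} [Fintype V] [DecidableEq V]
    (G : SimpleGraph V) [DecidableRel G.Adj] (h4 : ¬ HasFourCycle G) :
    (G.cliqueFinset 3).card ≤ G.edgeFinset.card := by
  rcases (G.cliqueFinset 3).eq_empty_or_nonempty with he | hne
  · simp [he]
  obtain ⟨t0, ht0⟩ := hne
  have hV : Nonempty V := by
    rw [SimpleGraph.mem_cliqueFinset_iff] at ht0
    obtain ⟨x, hx⟩ : t0.Nonempty := Finset.card_pos.mp (by rw [ht0.2]; norm_num)
    exact ⟨x⟩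
  inhabit V
  -- key facts about the chosen pair of vertices of a triangle
  have key : ∀ t ∈ G.cliqueFinset 3,
      t.toList.getD 0 default ∈ t ∧ t.toList.getD 1 default ∈ t ∧
      t.toList.getD 0 default ≠ t.toList.getD 1 default := by
    intro t ht
    rw [SimpleGraph.mem_cliqueFinset_iff] at ht
    have hl : t.toList.length = 3 := by rw [Finset.length_toList, ht.2]
    obtain ⟨a, b, c, habc⟩ := List.length_eq_three.mp hl
    have hnd : t.toList.Nodup := Finset.nodup_toList t
    rw [habc] at hnd ⊢
    have ha : a ∈ t := by rw [← Finset.mem_toList, habc]; simp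
    have hb : b ∈ t := by rw [← Finset.mem_toList, habc]; simp
    simp only [List.getD_cons_zero, List.getD_cons_succ]
    exact ⟨ha, hb, by simp [List.nodup_cons] at hnd; tauto⟩
  refine Finset.card_le_card_of_injOn
    (fun t => s(t.toList.getD 0 default, t.toList.getD 1 default)) ?_ ?_
  · intro t ht
    obtain ⟨hu, hv, huv⟩ := key t ht
    rw [Finset.mem_coe, SimpleGraph.mem_cliqueFinset_iff] at ht
    rw [Finset.mem_coe, SimpleGraph.mem_edgeFinset, SimpleGraph.mem_edgeSet]
    exact ht.1 hu hv huv
  · intro t1 ht1 t2 ht2 heq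
    by_contra hne12
    have ht1' := Finset.mem_coe.mp ht1
    have ht2' := Finset.mem_coe.mp ht2
    obtain ⟨hu1, hv1, huv1⟩ := key t1 ht1'
    obtain ⟨hu2, hv2, huv2⟩ := key t2 ht2'
    have hmem : t2.toList.getD 0 default ∈ t1 ∧ t2.toList.getD 1 default ∈ t1 := by
      simp only [Sym2.eq, Sym2.rel_iff', Prod.mk.injEq, Prod.swap_prod_mk] at heq
      rcases heq with ⟨h1, h2⟩ | ⟨h1, h2⟩
      · rw [← h1, ← h2]; exact ⟨hu1, hv1⟩
      · rw [← h2, ← h1]; exact ⟨hv1, hu1⟩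
    rw [SimpleGraph.mem_cliqueFinset_iff] at ht1' ht2'
    obtain ⟨w1, hw1t, hw1u, hw1v, ht1eq⟩ := third_elem t1 ht1'.2 hmem.1 hmem.2 huv2
    obtain ⟨w2, hw2t, hw2u, hw2v, ht2eq⟩ := third_elem t2 ht2'.2 hu2 hv2 huv2
    have hw12 : w1 ≠ w2 := by
      rintro rfl
      exact hne12 (ht1eq.trans ht2eq.symm)
    exact h4 ⟨_, w1, _, w2, hw1u.symm, huv2, hw2u.symm, hw1v, hw12, hw2v.symm,
      (ht1'.1 hmem.1 hw1t hw1u.symm),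
      (ht1'.1 hw1t hmem.2 hw1v),
      (ht2'.1 hv2 hw2t hw2v.symm),
      (ht2'.1 hw2t hu2 hw2u)⟩
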